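/- Let p₁, …, pₙ be distinct primes and G = ℚ_{p₁} × ⋯ × ℚ_{pₙ} (additive group, product topology). Then every closed subgroup H of G is a product H₁ × ⋯ × Hₙ where each Hᵢ is a closed subgroup of ℚ_{pᵢ}; in fact Hᵢ = H ∩ ℚ_{pᵢ} equals the image of H under the i-th projection. -/
import Mathlib

open Filter Topology Finset

/-- If the integers `m k` are divisible by `p ^ k`, then `m k * x → 0` in `ℚ_[p]`. -/
lemma tendsto_intCast_mul_of_dvd {p : ℕ} [Fact p.Prime] (x : ℚ_[p]) (m : ℕ → ℤ)
    (h : ∀ k, (p : ℤ) ^ k ∣ m k) :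
    Tendsto (fun k => (m k : ℚ_[p]) * x) atTop (𝓝 0) := by
  have hp1 : (1 : ℝ) < p := by exact_mod_cast (Fact.out : p.Prime).one_lt
  have hbound : ∀ k, ‖(m k : ℚ_[p]) * x‖ ≤ ((p : ℝ)⁻¹) ^ k * ‖x‖ := by
    intro k
    rw [norm_mul]
    have := (Padic.norm_int_le_pow_iff_dvd (p := p) (m k) k).mpr (h k)
    rw [zpow_neg, zpow_natCast, ← inv_pow] at this
    exact mul_le_mul_of_nonneg_right this (norm_nonneg x)
  have h0 : Tendsto (fun k => ((p : ℝ)⁻¹) ^ k * ‖x‖) atTop (𝓝 0) := by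
    have := tendsto_pow_atTop_nhds_zero_of_lt_one
      (by positivity : (0:ℝ) ≤ (p : ℝ)⁻¹) (inv_lt_one_of_one_lt₀ hp1)
    simpa using this.mul_const ‖x‖
  exact tendsto_zero_iff_norm_tendsto_zero.mpr (squeeze_zero (fun k => norm_nonneg _) hbound h0)

theorem closed_addSubgroup_pi_padic (n : ℕ) (p : Fin n → ℕ) [∀ i, Fact (p i).Prime]
    (hp : Function.Injective p) (H : AddSubgroup (∀ i, ℚ_[p i]))
    (hH : IsClosed (H : Set (∀ i, ℚ_[p i]))) :
    H = AddSubgroup.pi Set.univ (fun i => H.map (Pi.evalAddMonoidHom (fun j => ℚ_[p j]) i)) ∧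
      ∀ i, H.map (Pi.evalAddMonoidHom (fun j => ℚ_[p j]) i) =
        H.comap (AddMonoidHom.single (fun j => ℚ_[p j]) i) := by
  -- Key claim: for `x ∈ H`, the element `Pi.single i (x i)` is in `H`.
  have key : ∀ x ∈ H, ∀ i, Pi.single i (x i) ∈ H := by
    intro x hx i
    -- coprimality
    set Q : ℤ := ∏ j ∈ Finset.univ.erase i, (p j : ℤ) with hQ
    have hcop : ∀ k : ℕ, ∃ a b : ℤ, a * (p i : ℤ) ^ k + b * Q ^ k = 1 := by
      intro k
      have hnat : Nat.Coprime (p i) (∏ j ∈ Finset.univ.erase i, p j) :=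
        Nat.Coprime.prod_right fun j hj =>
          (Nat.coprime_primes (Fact.out : (p i).Prime) (Fact.out : (p j).Prime)).mpr
            fun h => (Finset.mem_erase.mp hj).1 (hp h.symm)
      have : IsCoprime ((p i : ℤ)) Q := by
        rw [hQ, ← Nat.cast_prod]
        exact Nat.isCoprime_iff_coprime.mpr hnat
      exact (this.pow (m := k) (n := k))
    choose a b hab using hcop
    set m : ℕ → ℤ := fun k => b k * Q ^ k with hm
    have hdvd_i : ∀ k, (p i : ℤ) ^ k ∣ m k - 1 := by
      intro k
      have hmk : m k = b k * Q ^ k := rfl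
      have : m k - 1 = -(a k * (p i : ℤ) ^ k) := by
        have := hab k; linarith
      rw [this]
      exact (dvd_mul_left _ _).neg_right
    have hdvd_j : ∀ j, j ≠ i → ∀ k, (p j : ℤ) ^ k ∣ m k := by
      intro j hj k
      have h1 : (p j : ℤ) ∣ Q :=
        Finset.dvd_prod_of_mem _ (Finset.mem_erase.mpr ⟨hj, Finset.mem_univ j⟩)
      exact dvd_mul_of_dvd_right (pow_dvd_pow_of_dvd h1 k) _
    -- convergence of `m k • x` to `Pi.single i (x i)`
    have hmem : ∀ k, m k • x ∈ H := fun k => AddSubgroup.zsmul_mem H hx (m k)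
    have htend : Tendsto (fun k => m k • x) atTop (𝓝 (Pi.single i (x i))) := by
      rw [tendsto_pi_nhds]
      intro j
      rcases eq_or_ne j i with rfl | hj
      · simp only [Pi.single_eq_same, Pi.smul_apply]
        have h0 := tendsto_intCast_mul_of_dvd (x j) (fun k => m k - 1) (hdvd_i)
        have : (fun k => m k • x j) = fun k => ((m k - 1 : ℤ) : ℚ_[p j]) * x j + x j := by
          funext k; rw [zsmul_eq_mul]; push_cast; ring
        rw [this]
        simpa using h0.add_const (x j)
      · simp only [Pi.single_eq_of_ne hj, Pi.smul_apply]
        have h0 := tendsto_intCast_mul_of_dvd (x j) m (hdvd_j j hj)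
        have : (fun k => m k • x j) = fun k => ((m k : ℤ) : ℚ_[p j]) * x j := by
          funext k; rw [zsmul_eq_mul]
        rwa [this]
    exact hH.mem_of_tendsto htend (Eventually.of_forall hmem)
  constructor
  · ext x
    constructor
    · intro hx j _
      exact ⟨x, hx, rfl⟩
    · intro hx
      have : x = ∑ j : Fin n, Pi.single j (x j) := (Finset.univ_sum_single x).symm
      rw [this]
      refine AddSubgroup.sum_mem H fun j _ => ?_
      obtain ⟨y, hy, hyx⟩ := hx j (Set.mem_univ j)
      have := key y hy j
      rwa [show y j = x j from hyx] at this
  · intro i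
    ext x
    constructor
    · rintro ⟨y, hy, rfl⟩
      exact key y hy i
    · intro hx
      exact ⟨Pi.single i x, hx, by simp⟩
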